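/- arXiv:1612.06808 — 2 statements merged into one kernel-verified Lean document; each statement's English description precedes it below -/
import Mathlib

section
/- Let κ, α, T > 0 with α < κ/T, and let t⋆ > 3T/2 (possibly +∞). Suppose y : [0,t⋆) → ℝ is continuous, C¹ on (0,t⋆), and satisfies y'(t) + κ y(t) ≤ α ∫_{t-T}^{t} y(s) ds for all t ∈ (3T/2, t⋆). Then there exists λ > 0 such that y(t) ≤ H e^{-λt} for all t ∈ [0,t⋆), where H := sup_{t ∈ [0,3T/2]} y(t) e^{λt}. -/
/-- Delayed Gronwall inequality: if `y' + κ y ≤ α ∫_{t-T}^t y` on `(3T/2, t⋆)` with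
`α < κ/T`, then `y` decays exponentially, `y(t) ≤ H e^{-λt}` with
`H = sup_{[0,3T/2]} y(t) e^{λt}`.  The final time `t⋆ > 3T/2` may be `+∞`. -/
theorem delayed_gronwall (κ α T : ℝ) (hκ : 0 < κ) (hα : 0 < α) (hT : 0 < T)
    (hαT : α < κ / T) (tstar : EReal) (htstar : ((3 * T / 2 : ℝ) : EReal) < tstar)
    (y y' : ℝ → ℝ)
    (hcont : ContinuousOn y {t : ℝ | 0 ≤ t ∧ (t : EReal) < tstar})
    (hcont' : ContinuousOn y' {t : ℝ | 0 < t ∧ (t : EReal) < tstar})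
    (hderiv : ∀ t : ℝ, 0 < t → (t : EReal) < tstar → HasDerivAt y (y' t) t)
    (hineq : ∀ t : ℝ, 3 * T / 2 < t → (t : EReal) < tstar →
      y' t + κ * y t ≤ α * ∫ s in (t - T)..t, y s) :
    ∃ lam > (0 : ℝ), ∀ t : ℝ, 0 ≤ t → (t : EReal) < tstar →
      y t ≤ (⨆ s : Set.Icc (0 : ℝ) (3 * T / 2), y s * Real.exp (lam * s)) *
        Real.exp (-lam * t) := by
  -- Step 1: find the positive root `lam` of `lam (lam - κ) + α (e^{lam T} - 1) = 0`.
  obtain ⟨lam, hlam0, hlamκ, hroot⟩ :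
      ∃ lam : ℝ, 0 < lam ∧ lam < κ ∧ α * (Real.exp (lam * T) - 1) = lam * (κ - lam) := by
    have hαTκ : α * T < κ := by
      rw [div_eq_mul_inv] at hαT
      calc α * T < κ / T * T := by exact mul_lt_mul_of_pos_right hαT hT
      _ = κ := by field_simp
    set f : ℝ → ℝ := fun l => l * (l - κ) + α * (Real.exp (l * T) - 1) with hf
    have hfc : Continuous f := by fun_prop
    have hev : ∀ᶠ δ in nhdsWithin (0:ℝ) (Set.Ioi 0),
        δ + α * T * Real.exp (δ * T) < κ := by
      have hc : ContinuousAt (fun δ : ℝ => δ + α * T * Real.exp (δ * T)) 0 := by fun_prop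
      have h0 : (fun δ : ℝ => δ + α * T * Real.exp (δ * T)) 0 < κ := by
        simpa using hαTκ
      exact (hc.eventually_lt continuousAt_const h0).filter_mono nhdsWithin_le_nhds
    obtain ⟨δ, hδκ, hδpos⟩ := (hev.and (eventually_mem_nhdsWithin)).exists
    rw [Set.mem_Ioi] at hδpos
    have hδltκ : δ < κ := by
      have : 0 < α * T * Real.exp (δ * T) :=
        mul_pos (mul_pos hα hT) (Real.exp_pos _)
      linarith
    have hfδ : f δ < 0 := by
      have h2 : -(δ * T) + 1 ≤ Real.exp (-(δ * T)) := Real.add_one_le_exp _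
      have h1 : Real.exp (-(δ * T)) * Real.exp (δ * T) = 1 := by
        rw [← Real.exp_add]; simp
      have h3 : (0:ℝ) < Real.exp (δ * T) := Real.exp_pos _
      have h4 : Real.exp (δ * T) - 1 ≤ δ * T * Real.exp (δ * T) := by nlinarith
      have h5 : f δ ≤ δ * (δ - κ + α * T * Real.exp (δ * T)) := by
        simp only [hf]; nlinarith
      have h6 : δ * (δ - κ + α * T * Real.exp (δ * T)) < 0 := by
        apply mul_neg_of_pos_of_neg hδpos; linarith
      linarith
    have hfκ : 0 < f κ := by
      have : (1:ℝ) < Real.exp (κ * T) := by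
        have := Real.add_one_le_exp (κ * T)
        nlinarith [mul_pos hκ hT]
      simp only [hf]; nlinarith
    have hsub := intermediate_value_Icc hδltκ.le hfc.continuousOn
    have h0mem : (0:ℝ) ∈ Set.Icc (f δ) (f κ) := ⟨hfδ.le, hfκ.le⟩
    obtain ⟨lam, hlammem, hlam0⟩ := hsub h0mem
    refine ⟨lam, lt_of_lt_of_le hδpos hlammem.1, ?_, ?_⟩
    · rcases lt_or_eq_of_le hlammem.2 with h | h
      · exact h
      · exfalso; rw [h] at hlam0; rw [hlam0] at hfκ; exact lt_irrefl 0 hfκ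
    · simp only [hf] at hlam0; nlinarith [hlam0]
  refine ⟨lam, hlam0, ?_⟩
  have h3T : (0:ℝ) < 3 * T / 2 := by linarith
  set H := ⨆ s : Set.Icc (0 : ℝ) (3 * T / 2), y s * Real.exp (lam * s) with hH
  -- domain inclusions
  have hIccsub : Set.Icc (0:ℝ) (3 * T / 2) ⊆ {t : ℝ | 0 ≤ t ∧ (t : EReal) < tstar} := by
    intro s hs
    exact ⟨hs.1, lt_of_le_of_lt (EReal.coe_le_coe_iff.2 hs.2) htstar⟩
  have hzcont0 : ContinuousOn (fun t => y t * Real.exp (lam * t))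
      {t : ℝ | 0 ≤ t ∧ (t : EReal) < tstar} := hcont.mul (by fun_prop)
  have hbdd : BddAbove (Set.range fun s : Set.Icc (0:ℝ) (3 * T / 2) =>
      y s * Real.exp (lam * s)) := by
    have himg := (isCompact_Icc.image_of_continuousOn (hzcont0.mono hIccsub)).bddAbove
    rw [Set.image_eq_range] at himg
    exact himg
  have hHle : ∀ s : ℝ, 0 ≤ s → s ≤ 3 * T / 2 → y s * Real.exp (lam * s) ≤ H :=
    fun s h1 h2 => le_ciSup hbdd (⟨s, h1, h2⟩ : Set.Icc (0:ℝ) (3 * T / 2))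
  -- Key claim: z t := y t e^{lam t} ≤ H on the whole domain.
  have key : ∀ t₂ : ℝ, 0 ≤ t₂ → (t₂ : EReal) < tstar →
      y t₂ * Real.exp (lam * t₂) ≤ H := by
    intro t₂ ht₂0 ht₂s
    by_cases hcase : t₂ ≤ 3 * T / 2
    · exact hHle t₂ ht₂0 hcase
    push_neg at hcase
    have hsub2 : Set.Icc (0:ℝ) t₂ ⊆ {t : ℝ | 0 ≤ t ∧ (t : EReal) < tstar} := fun s hs =>
      ⟨hs.1, lt_of_le_of_lt (EReal.coe_le_coe_iff.2 hs.2) ht₂s⟩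
    have hzc : ContinuousOn (fun t => y t * Real.exp (lam * t)) (Set.Icc 0 t₂) :=
      hzcont0.mono hsub2
    obtain ⟨tm, htm, hmax⟩ := isCompact_Icc.exists_isMaxOn (Set.nonempty_Icc.2 ht₂0) hzc
    have hmax' : ∀ s ∈ Set.Icc (0:ℝ) t₂,
        y s * Real.exp (lam * s) ≤ y tm * Real.exp (lam * tm) := fun s hs => hmax hs
    have hAH : y tm * Real.exp (lam * tm) ≤ H := by
      by_cases hc2 : tm ≤ 3 * T / 2
      · exact hHle tm htm.1 hc2
      push_neg at hc2
      set A := y tm * Real.exp (lam * tm) with hA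
      set g : ℝ → ℝ := fun t =>
        (A - y t * Real.exp (lam * t)) * Real.exp ((κ - lam) * t) with hg
      -- derivative of g at interior points is nonnegative
      have hgd : ∀ x ∈ Set.Ioo (3 * T / 2) tm, HasDerivAt g
          ((0 - (y' x * Real.exp (lam * x) + y x * (lam * Real.exp (lam * x)))) *
            Real.exp ((κ - lam) * x) +
            (A - y x * Real.exp (lam * x)) * ((κ - lam) * Real.exp ((κ - lam) * x))) x := by
        intro x hx
        have hx0 : 0 < x := lt_trans h3T hx.1
        have hxt₂ : x ≤ t₂ := le_trans hx.2.le htm.2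
        have hxs : (x : EReal) < tstar :=
          lt_of_le_of_lt (EReal.coe_le_coe_iff.2 hxt₂) ht₂s
        have hyx := hderiv x hx0 hxs
        have he : HasDerivAt (fun t => Real.exp (lam * t)) (lam * Real.exp (lam * x)) x := by
          have h1 : HasDerivAt (fun t : ℝ => lam * t) lam x := by
            simpa using (hasDerivAt_id x).const_mul lam
          convert h1.exp using 1
          ring
        have hea : HasDerivAt (fun t => Real.exp ((κ - lam) * t))
            ((κ - lam) * Real.exp ((κ - lam) * x)) x := by
          have h1 : HasDerivAt (fun t : ℝ => (κ - lam) * t) (κ - lam) x := by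
            simpa using (hasDerivAt_id x).const_mul (κ - lam)
          convert h1.exp using 1
          ring
        exact ((hasDerivAt_const x A).sub (hyx.mul he)).mul hea
      have hderiv_nonneg : ∀ x ∈ Set.Ioo (3 * T / 2) tm, 0 ≤
          ((0 - (y' x * Real.exp (lam * x) + y x * (lam * Real.exp (lam * x)))) *
            Real.exp ((κ - lam) * x) +
            (A - y x * Real.exp (lam * x)) * ((κ - lam) * Real.exp ((κ - lam) * x))) := by
        intro x hx
        have hx0 : 0 < x := lt_trans h3T hx.1
        have hxt₂ : x ≤ t₂ := le_trans hx.2.le htm.2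
        have hxs : (x : EReal) < tstar :=
          lt_of_le_of_lt (EReal.coe_le_coe_iff.2 hxt₂) ht₂s
        have hint := hineq x hx.1 hxs
        have habint : x - T ≤ x := by linarith
        have hxT0 : (0:ℝ) ≤ x - T := by linarith [hx.1]
        have huIcc : Set.uIcc (x - T) x ⊆ Set.Icc (0:ℝ) t₂ := by
          rw [Set.uIcc_of_le habint]
          intro s hs
          exact ⟨le_trans hxT0 hs.1, le_trans hs.2 hxt₂⟩
        have hyint : IntervalIntegrable y MeasureTheory.volume (x - T) x :=
          (((hcont.mono hsub2)).mono huIcc).intervalIntegrable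
        have hgint : IntervalIntegrable (fun s => A * Real.exp (-(lam * s)))
            MeasureTheory.volume (x - T) x := by
          apply Continuous.intervalIntegrable; fun_prop
        have hmono : (∫ s in (x - T)..x, y s) ≤
            ∫ s in (x - T)..x, A * Real.exp (-(lam * s)) := by
          apply intervalIntegral.integral_mono_on habint hyint hgint
          intro s hs
          have hzs : y s * Real.exp (lam * s) ≤ A :=
            hmax' s ⟨le_trans hxT0 hs.1, le_trans hs.2 hxt₂⟩
          have h2 : Real.exp (lam * s) * Real.exp (-(lam * s)) = 1 := by
            rw [← Real.exp_add]; simp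
          calc y s = y s * Real.exp (lam * s) * Real.exp (-(lam * s)) := by
                rw [mul_assoc, h2, mul_one]
          _ ≤ A * Real.exp (-(lam * s)) :=
                mul_le_mul_of_nonneg_right hzs (Real.exp_pos _).le
        have hcalc : (∫ s in (x - T)..x, A * Real.exp (-(lam * s))) =
            A * (Real.exp (-(lam * (x - T))) - Real.exp (-(lam * x))) / lam := by
          have hFd : ∀ s ∈ Set.uIcc (x - T) x,
              HasDerivAt (fun u => A * (-Real.exp (-(lam * u)) / lam))
                (A * Real.exp (-(lam * s))) s := by
            intro s _
            have h1 : HasDerivAt (fun u : ℝ => -(lam * u)) (-lam) s := by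
              simpa using ((hasDerivAt_id s).const_mul lam).fun_neg
            have h2 : HasDerivAt (fun u => Real.exp (-(lam * u)))
                (Real.exp (-(lam * s)) * -lam) s := (Real.hasDerivAt_exp _).comp s h1
            have h3 := ((h2.fun_neg).div_const lam).const_mul A
            exact h3.congr_deriv (by rw [mul_neg, neg_neg, mul_div_cancel_right₀ _ hlam0.ne'])
          rw [intervalIntegral.integral_eq_sub_of_hasDerivAt hFd hgint]
          field_simp
          ring
        -- the core estimate: α * I * e^{lam x} ≤ (κ - lam) * A
        have hEx : (0:ℝ) < Real.exp (lam * x) := Real.exp_pos _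
        have hEE : Real.exp (lam * x) *
            (Real.exp (-(lam * (x - T))) - Real.exp (-(lam * x))) = Real.exp (lam * T) - 1 := by
          rw [mul_sub, ← Real.exp_add, ← Real.exp_add]
          norm_num
          ring_nf
        have hkey : α * ((∫ s in (x - T)..x, y s) * Real.exp (lam * x)) ≤ (κ - lam) * A := by
          have h1 : (∫ s in (x - T)..x, y s) ≤
              A * (Real.exp (-(lam * (x - T))) - Real.exp (-(lam * x))) / lam := by
            rw [← hcalc]; exact hmono
          calc α * ((∫ s in (x - T)..x, y s) * Real.exp (lam * x))
              ≤ α * (A * (Real.exp (-(lam * (x - T))) - Real.exp (-(lam * x))) / lam *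
                Real.exp (lam * x)) :=
                mul_le_mul_of_nonneg_left (mul_le_mul_of_nonneg_right h1 hEx.le) hα.le
          _ = α * A * (Real.exp (lam * x) *
                (Real.exp (-(lam * (x - T))) - Real.exp (-(lam * x)))) / lam := by ring
          _ = α * A * (Real.exp (lam * T) - 1) / lam := by rw [hEE]
          _ = A * (α * (Real.exp (lam * T) - 1)) / lam := by ring
          _ = A * (lam * (κ - lam)) / lam := by rw [hroot]
          _ = (κ - lam) * A := by field_simp
        have h2 : y' x ≤ α * (∫ s in (x - T)..x, y s) - κ * y x := by linarith
        have h3 : y' x * Real.exp (lam * x) ≤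
            (α * (∫ s in (x - T)..x, y s) - κ * y x) * Real.exp (lam * x) :=
          mul_le_mul_of_nonneg_right h2 hEx.le
        have h4 : 0 ≤ (κ - lam) * A -
            (y' x * Real.exp (lam * x) + y x * (lam * Real.exp (lam * x)) +
              (κ - lam) * (y x * Real.exp (lam * x))) := by nlinarith
        have h5 : (0 - (y' x * Real.exp (lam * x) + y x * (lam * Real.exp (lam * x)))) *
            Real.exp ((κ - lam) * x) +
            (A - y x * Real.exp (lam * x)) * ((κ - lam) * Real.exp ((κ - lam) * x)) =
            ((κ - lam) * A -
              (y' x * Real.exp (lam * x) + y x * (lam * Real.exp (lam * x)) +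
                (κ - lam) * (y x * Real.exp (lam * x)))) * Real.exp ((κ - lam) * x) := by
          ring
        rw [h5]
        exact mul_nonneg h4 (Real.exp_pos _).le
      have hIccsub4 : Set.Icc (3 * T / 2) tm ⊆ Set.Icc (0:ℝ) t₂ := by
        intro s hs
        exact ⟨le_trans h3T.le hs.1, le_trans hs.2 htm.2⟩
      have hgmono : MonotoneOn g (Set.Icc (3 * T / 2) tm) := by
        apply monotoneOn_of_deriv_nonneg (convex_Icc _ _)
        · apply ContinuousOn.mul
          · exact continuousOn_const.sub (hzc.mono hIccsub4)
          · fun_prop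
        · intro x hx
          rw [interior_Icc] at hx
          exact (hgd x hx).differentiableAt.differentiableWithinAt
        · intro x hx
          rw [interior_Icc] at hx
          rw [(hgd x hx).deriv]
          exact hderiv_nonneg x hx
      have hmem1 : (3 * T / 2) ∈ Set.Icc (3 * T / 2) tm := ⟨le_refl _, hc2.le⟩
      have hmem2 : tm ∈ Set.Icc (3 * T / 2) tm := ⟨hc2.le, le_refl _⟩
      have hgle : g (3 * T / 2) ≤ g tm := hgmono hmem1 hmem2 hc2.le
      have hgtm : g tm = 0 := by simp [hg, hA]
      rw [hgtm] at hgle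
      have h6 : A - y (3 * T / 2) * Real.exp (lam * (3 * T / 2)) ≤ 0 := by
        by_contra h
        push_neg at h
        have := mul_pos h (Real.exp_pos ((κ - lam) * (3 * T / 2)))
        simp only [hg] at hgle
        linarith
      have h7 := hHle (3 * T / 2) h3T.le (le_refl _)
      linarith
    exact le_trans (hmax' t₂ ⟨ht₂0, le_refl _⟩) hAH
  intro t ht0 hts
  have h := key t ht0 hts
  have hE : 0 < Real.exp (lam * t) := Real.exp_pos _
  rw [neg_mul, Real.exp_neg, ← div_eq_mul_inv, le_div_iff₀ hE]
  exact h
end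

section
/- Let κ, α, T > 0 with α < κ/T. Then the function φ(λ) = λ² - λκ + α(e^{λT} - 1) has a unique positive root λ > 0. Moreover, this root λ is non-increasing as a function of α (with κ, T fixed). -/
open Real

private lemma exp_sub_one_le' (y : ℝ) (hy : 0 ≤ y) (hy2 : y ≤ 1/2) :
    Real.exp y - 1 ≤ y + 2*y^2 := by
  have h1 : -y + 1 ≤ Real.exp (-y) := Real.add_one_le_exp (-y)
  have h3 : 0 < Real.exp y := Real.exp_pos y
  have h4 : (1 - y) * Real.exp y ≤ 1 := by
    rw [Real.exp_neg] at h1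
    calc (1-y) * Real.exp y ≤ (Real.exp y)⁻¹ * Real.exp y := by nlinarith
    _ = 1 := inv_mul_cancel₀ (ne_of_gt h3)
  nlinarith [mul_nonneg (mul_nonneg hy hy) hy, mul_pos (by linarith : (0:ℝ) < 1 - y) h3]

private lemma phi_strict' (κ T α a b : ℝ) (hT : 0 < T) (hα : 0 < α)
    (ha : 0 < a) (hab : a < b) :
    a^2 - a*κ + α*(Real.exp (a*T) - 1) < (a/b) * (b^2 - b*κ + α*(Real.exp (b*T) - 1)) := by
  have hb : 0 < b := ha.trans hab
  set t := a/b with ht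
  have ht0 : 0 < t := div_pos ha hb
  have ht1 : t < 1 := (div_lt_one hb).mpr hab
  have hat : a = t * b := by rw [ht, div_mul_cancel₀ a hb.ne']
  have hconv := convexOn_exp.2 (Set.mem_univ (0:ℝ)) (Set.mem_univ (b*T))
    (by linarith : (0:ℝ) ≤ 1 - t) (le_of_lt ht0) (by ring)
  simp only [smul_eq_mul, mul_zero, zero_add, Real.exp_zero, mul_one] at hconv
  have hE : Real.exp (t*b*T) ≤ (1-t) + t * Real.exp (b*T) := by
    rw [mul_assoc]; exact hconv
  rw [hat]
  nlinarith [mul_le_mul_of_nonneg_left hE hα.le,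
    mul_pos (mul_pos ht0 (sub_pos.mpr ht1)) (mul_pos hb hb), Real.exp_pos (b*T)]

private lemma no_two_roots' (κ T α a b : ℝ) (hT : 0 < T) (hα : 0 < α)
    (ha : 0 < a) (hab : a < b)
    (hra : a^2 - a*κ + α*(Real.exp (a*T) - 1) = 0)
    (hrb : b^2 - b*κ + α*(Real.exp (b*T) - 1) ≤ 0) : False := by
  have h := phi_strict' κ T α a b hT hα ha hab
  have hb : 0 < b := ha.trans hab
  have : (a/b) * (b^2 - b*κ + α*(Real.exp (b*T) - 1)) ≤ 0 :=
    mul_nonpos_of_nonneg_of_nonpos (le_of_lt (div_pos ha hb)) hrb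
  linarith

/-- For `κ, T > 0` and `0 < α < κ/T`, the function
`φ(λ) = λ² - λκ + α(e^{λT} - 1)` has a unique positive root, and this root is
non-increasing as a function of `α`. -/
theorem phi_unique_positive_root (κ T : ℝ) (hκ : 0 < κ) (hT : 0 < T) :
    (∀ α : ℝ, 0 < α → α < κ / T →
      ∃! lam : ℝ, 0 < lam ∧ lam ^ 2 - lam * κ + α * (Real.exp (lam * T) - 1) = 0)
    ∧ (∀ α₁ α₂ lam₁ lam₂ : ℝ, 0 < α₁ → α₁ ≤ α₂ → α₂ < κ / T →
        0 < lam₁ → lam₁ ^ 2 - lam₁ * κ + α₁ * (Real.exp (lam₁ * T) - 1) = 0 →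
        0 < lam₂ → lam₂ ^ 2 - lam₂ * κ + α₂ * (Real.exp (lam₂ * T) - 1) = 0 →
        lam₂ ≤ lam₁) := by
  constructor
  · intro α hα hακ
    have hκT : α * T < κ := (lt_div_iff₀ hT).mp hακ
    set f : ℝ → ℝ := fun x => x ^ 2 - x * κ + α * (Real.exp (x * T) - 1) with hf
    -- a point where f is negative
    set x₀ : ℝ := min (1/(2*T)) ((κ - α*T)/(2*(1+2*α*T^2))) with hx₀
    have hden : 0 < 2*(1+2*α*T^2) := by positivity
    have hx₀pos : 0 < x₀ := lt_min (by positivity) (div_pos (by linarith) hden)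
    have hyT : x₀ * T ≤ 1/2 := by
      have : x₀ ≤ 1/(2*T) := min_le_left _ _
      calc x₀ * T ≤ (1/(2*T)) * T := by nlinarith
      _ = 1/2 := by field_simp
    have hexp := exp_sub_one_le' (x₀*T) (by positivity) hyT
    have hx₀small : x₀ * (2*(1+2*α*T^2)) ≤ κ - α*T := by
      have h := min_le_right (1/(2*T)) ((κ - α*T)/(2*(1+2*α*T^2)))
      rw [← hx₀] at h
      calc x₀ * (2*(1+2*α*T^2)) ≤ ((κ - α*T)/(2*(1+2*α*T^2))) * (2*(1+2*α*T^2)) := by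
            nlinarith
      _ = κ - α*T := by field_simp
    have hfneg : f x₀ < 0 := by
      have : f x₀ ≤ x₀ ^ 2 - x₀ * κ + α * (x₀*T + 2*(x₀*T)^2) := by
        simp only [hf]
        nlinarith
      nlinarith [sq_nonneg x₀, mul_pos hx₀pos hx₀pos, hα.le,
        mul_pos (mul_pos hα hT) hT]
    -- a point where f is positive
    set b₀ : ℝ := max x₀ κ + 1 with hb₀
    have hb₀κ : κ < b₀ := lt_of_le_of_lt (le_max_right _ _) (by linarith)
    have hb₀x : x₀ < b₀ := lt_of_le_of_lt (le_max_left _ _) (by linarith)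
    have hb₀pos : 0 < b₀ := hκ.trans hb₀κ
    have hfpos : 0 < f b₀ := by
      have h1 : (1:ℝ) < Real.exp (b₀ * T) := by
        rw [← Real.exp_zero]
        exact Real.exp_lt_exp.mpr (by positivity)
      simp only [hf]
      nlinarith
    have hcont : Continuous f := by
      simp only [hf]
      exact ((continuous_pow 2).sub (continuous_id.mul continuous_const)).add
        (continuous_const.mul ((Real.continuous_exp.comp
          (continuous_id.mul continuous_const)).sub continuous_const))
    have hIVT := intermediate_value_Icc (le_of_lt hb₀x) hcont.continuousOn
    have h0mem : (0:ℝ) ∈ Set.Icc (f x₀) (f b₀) := ⟨hfneg.le, hfpos.le⟩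
    obtain ⟨lam, hlammem, hlameq⟩ := hIVT h0mem
    have hlampos : 0 < lam := lt_of_lt_of_le hx₀pos hlammem.1
    refine ⟨lam, ⟨hlampos, hlameq⟩, ?_⟩
    rintro y ⟨hy, hyeq⟩
    by_contra hne
    rcases lt_or_gt_of_ne hne with h | h
    · exact no_two_roots' κ T α y lam hT hα hy h hyeq (le_of_eq hlameq)
    · exact no_two_roots' κ T α lam y hT hα hlampos h hlameq (le_of_eq hyeq)
  · intro α₁ α₂ lam₁ lam₂ hα₁ h12 hα₂κ h1pos h1eq h2pos h2eq
    by_contra h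
    push_neg at h
    have hE : (1:ℝ) ≤ Real.exp (lam₂ * T) := Real.one_le_exp (by positivity)
    have hle : lam₂ ^ 2 - lam₂ * κ + α₁ * (Real.exp (lam₂ * T) - 1) ≤ 0 := by
      nlinarith
    exact no_two_roots' κ T α₁ lam₁ lam₂ hT hα₁ h1pos h h1eq hle
end
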